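/- Let V be an n-dimensional vector space over F_q, let S be an i-dimensional subspace and S' an f-dimensional subspace with S ∩ S' = {0}. Then the number of e-dimensional subspaces T of V with S ⊆ T and T ∩ S' = {0} equals q^(f(e-i)) · C_q(n-i-f, e-i). -/

import Mathlib

/-- The Gaussian binomial coefficient `C_q(a,k) = ∏_{0 ≤ i < k} (q^(a-i)-1)/(q^(k-i)-1)`. -/
noncomputable def gbinom (q : ℝ) (a k : ℕ) : ℝ :=
  ∏ i ∈ Finset.range k, (q ^ (a - i) - 1) / (q ^ (k - i) - 1)

open Module Submodule

set_option linter.unusedSectionVars false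
set_option linter.unusedVariables false

lemma finV (K V : Type*) [Field K] [Fintype K] [AddCommGroup V] [Module K V]
    [FiniteDimensional K V] : Finite V := Module.finite_of_finite K

lemma nat_card_sigma_const {ι : Type*} [Finite ι] {F : ι → Type*} [∀ i, Finite (F i)] {c : ℕ}
    (h : ∀ i, Nat.card (F i) = c) : Nat.card (Σ i, F i) = Nat.card ι * c := by
  have : Fintype ι := Fintype.ofFinite ι
  haveI : ∀ i, Fintype (F i) := fun i => Fintype.ofFinite (F i)
  simp only [Nat.card_eq_fintype_card, Fintype.card_sigma]
  have : ∀ i : ι, Fintype.card (F i) = c := fun i => by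
    rw [← Nat.card_eq_fintype_card, h]
  rw [Finset.sum_congr rfl fun i _ => this i, Finset.sum_const, Finset.card_univ, smul_eq_mul]

section aux
variable {K V : Type*} [Field K] [Fintype K] [AddCommGroup V] [Module K V]
  [FiniteDimensional K V]

local notation "q" => Fintype.card K

lemma card_LI (k : ℕ) :
    Nat.card { s : Fin k → V // LinearIndependent K s }
      = ∏ j : Fin k, (q ^ finrank K V - q ^ j.val) := by
  have := finV K V
  rcases le_or_gt k (finrank K V) with hk | hk
  · exact card_linearIndependent hk
  · have : IsEmpty { s : Fin k → V // LinearIndependent K s } := by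
      constructor
      rintro ⟨s, hs⟩
      have := hs.fintype_card_le_finrank
      simp only [Fintype.card_fin] at this
      omega
    rw [Nat.card_of_isEmpty]
    refine (Finset.prod_eq_zero (Finset.mem_univ (⟨finrank K V, hk⟩ : Fin k)) ?_).symm
    simp

/-- Lemma B: count tuples whose images mod S' are independent, via a section. -/
lemma card_tuples_mkQ (S' : Submodule K V) (k : ℕ) :
    Nat.card {v : Fin k → V // LinearIndependent K (S'.mkQ ∘ v)}
      = q ^ (finrank K S' * k)
        * ∏ j : Fin k, (q ^ (finrank K (V ⧸ S')) - q ^ j.val) := by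
  have := finV K V
  obtain ⟨σ, hσ⟩ := S'.mkQ.exists_rightInverse_of_surjective (Submodule.range_mkQ S')
  have hσ' : ∀ x, S'.mkQ (σ x) = x := fun x => LinearMap.congr_fun hσ x
  have e : {v : Fin k → V // LinearIndependent K (S'.mkQ ∘ v)}
      ≃ {w : Fin k → V ⧸ S' // LinearIndependent K w} × (Fin k → S') :=
  { toFun := fun v => (⟨S'.mkQ ∘ v.1, v.2⟩, fun j => ⟨v.1 j - σ (S'.mkQ (v.1 j)), by
      have : S'.mkQ (v.1 j - σ (S'.mkQ (v.1 j))) = 0 := by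
        simp [map_sub, hσ']
      rwa [Submodule.mkQ_apply, Submodule.Quotient.mk_eq_zero] at this⟩)
    invFun := fun p => ⟨fun j => σ (p.1.1 j) + (p.2 j : V), by
      have hc : S'.mkQ ∘ (fun j => σ (p.1.1 j) + (p.2 j : V)) = p.1.1 := by
        funext j
        have h0 : S'.mkQ (p.2 j : V) = 0 := by
          rw [Submodule.mkQ_apply, Submodule.Quotient.mk_eq_zero]; exact (p.2 j).2
        simp [map_add, hσ', h0]
      rw [hc]; exact p.1.2⟩
    left_inv := fun v => by
      ext j
      simp
    right_inv := fun p => by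
      have h0 : ∀ j, S'.mkQ (p.2 j : V) = 0 := fun j => by
        rw [Submodule.mkQ_apply, Submodule.Quotient.mk_eq_zero]; exact (p.2 j).2
      ext j
      · simp [map_add, hσ', h0]
      · simp [map_add, hσ', h0] }
  rw [Nat.card_congr e, Nat.card_prod]
  rw [card_LI]
  rw [Nat.card_fun]
  have hS' : Nat.card S' = q ^ finrank K S' := by
    have : Fintype S' := Fintype.ofFinite _
    rw [Nat.card_eq_fintype_card, card_eq_pow_finrank (K := K) (V := S')]
  rw [hS', Nat.card_eq_fintype_card, Fintype.card_fin, ← pow_mul, mul_comm]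


/-- Lemma A: fibering independent-mod-S' tuples over their spans. -/
lemma card_tuples_fiber (S' : Submodule K V) (k : ℕ) :
    Nat.card {v : Fin k → V // LinearIndependent K (S'.mkQ ∘ v)}
      = Nat.card {U : Submodule K V // finrank K U = k ∧ U ⊓ S' = ⊥}
        * ∏ j : Fin k, (q ^ k - q ^ j.val) := by
  have := finV K V
  set P := fun v : Fin k → V => LinearIndependent K (S'.mkQ ∘ v) with hP
  set I := {U : Submodule K V // finrank K U = k ∧ U ⊓ S' = ⊥} with hI
  have φprop : ∀ v : {v : Fin k → V // P v},
      finrank K (span K (Set.range v.1)) = k ∧ span K (Set.range v.1) ⊓ S' = ⊥ := by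
    rintro ⟨v, hv⟩
    have hLI : LinearIndependent K v := hv.of_comp S'.mkQ
    constructor
    · rw [finrank_span_eq_card hLI, Fintype.card_fin]
    · have hd := Submodule.range_ker_disjoint hv
      rw [Submodule.ker_mkQ] at hd
      exact disjoint_iff.mp hd
  set φ : {v : Fin k → V // P v} → I := fun v => ⟨span K (Set.range v.1), φprop v⟩ with hφ
  rw [Nat.card_congr (Equiv.sigmaFiberEquiv φ).symm]
  refine nat_card_sigma_const fun U => ?_
  -- fiber over U ≃ independent k-tuples in U
  have eU : {v : {v : Fin k → V // P v} // φ v = U}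
      ≃ {w : Fin k → U.1 // LinearIndependent K w} :=
  { toFun := fun v => ⟨fun j => ⟨v.1.1 j, by
      have hsp : span K (Set.range v.1.1) = U.1 := congrArg Subtype.val v.2
      exact hsp ▸ Submodule.subset_span (Set.mem_range_self j)⟩, by
      have hLI : LinearIndependent K v.1.1 := v.1.2.of_comp S'.mkQ
      exact hLI.of_comp U.1.subtype⟩
    invFun := fun w => ⟨⟨fun j => (w.1 j : V), by
      have h1 : LinearIndependent K (fun j => (w.1 j : V)) :=
        w.2.map' U.1.subtype (Submodule.ker_subtype U.1)
      have h2 : Disjoint (span K (Set.range fun j => (w.1 j : V))) (LinearMap.ker S'.mkQ) := by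
        rw [Submodule.ker_mkQ]
        refine Disjoint.mono_left ?_ (disjoint_iff.mpr U.2.2)
        rw [Submodule.span_le]
        rintro x ⟨j, rfl⟩
        exact (w.1 j).2
      exact h1.map h2⟩, by
      apply Subtype.ext
      show span K (Set.range fun j => (w.1 j : V)) = U.1
      have : Set.range (fun j => (w.1 j : V)) = U.1.subtype '' Set.range w.1 := by
        rw [← Set.range_comp]; rfl
      have htop : span K (Set.range w.1) = (⊤ : Submodule K U.1) :=
        Submodule.eq_top_of_finrank_eq
          (by rw [finrank_span_eq_card w.2, Fintype.card_fin, U.2.1])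
      rw [this, ← Submodule.map_span, htop, Submodule.map_subtype_top]⟩
    left_inv := fun v => by
      apply Subtype.ext; apply Subtype.ext; rfl
    right_inv := fun w => by
      apply Subtype.ext; funext j; apply Subtype.ext; rfl }
  rw [Nat.card_congr eU, card_LI, U.2.1]

/-- Lemma C: real-number count of `k`-dimensional subspaces meeting `S'` trivially. -/
lemma card_avoid (S' : Submodule K V) (k : ℕ) :
    (Nat.card {U : Submodule K V // finrank K U = k ∧ U ⊓ S' = ⊥} : ℝ)
      = (q : ℝ) ^ (finrank K S' * k)
          * gbinom q (finrank K V - finrank K S') k := by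
  have hq2 : 2 ≤ q := Fintype.one_lt_card
  have hd' : finrank K (V ⧸ S') = finrank K V - finrank K S' := by
    have := Submodule.finrank_quotient_add_finrank S'
    omega
  set d' := finrank K (V ⧸ S') with hd
  set N := Nat.card {U : Submodule K V // finrank K U = k ∧ U ⊓ S' = ⊥} with hN
  have key : N * ∏ j : Fin k, (q ^ k - q ^ j.val)
      = q ^ (finrank K S' * k) * ∏ j : Fin k, (q ^ d' - q ^ j.val) := by
    rw [← card_tuples_fiber, card_tuples_mkQ]
  have hposk : ∀ j : Fin k, 0 < q ^ k - q ^ j.val := fun j => by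
    have : q ^ j.val < q ^ k := Nat.pow_lt_pow_right (by omega) j.2
    omega
  have hq1 : (1:ℝ) < (q:ℝ) := by exact_mod_cast hq2
  have e1 : ∀ a : ℕ, k ≤ a →
      (((∏ j : Fin k, (q ^ a - q ^ j.val)) : ℕ) : ℝ)
        = ∏ j : Fin k, ((q:ℝ) ^ a - (q:ℝ) ^ j.val) := by
    intro a ha
    rw [Nat.cast_prod]
    refine Finset.prod_congr rfl fun j _ => ?_
    rw [Nat.cast_sub (Nat.pow_le_pow_right (by omega) (j.2.trans_le ha).le)]
    push_cast; ring
  rw [← hd']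
  rcases le_or_gt k d' with hk | hk
  · have keyR : (N : ℝ) * ∏ j : Fin k, ((q:ℝ) ^ k - (q:ℝ) ^ j.val)
        = (q:ℝ) ^ (finrank K S' * k) * ∏ j : Fin k, ((q:ℝ) ^ d' - (q:ℝ) ^ j.val) := by
      have h := congrArg (fun m : ℕ => (m : ℝ)) key
      simp only [Nat.cast_mul] at h
      rw [e1 k le_rfl, e1 d' hk, Nat.cast_pow] at h
      exact_mod_cast h
    have hPk : (0:ℝ) < ∏ j : Fin k, ((q:ℝ) ^ k - (q:ℝ) ^ j.val) :=
      Finset.prod_pos fun j _ => by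
        have : (q:ℝ) ^ j.val < (q:ℝ) ^ k := pow_lt_pow_right₀ hq1 j.2
        linarith
    have gb : gbinom q d' k * ∏ j : Fin k, ((q:ℝ) ^ k - (q:ℝ) ^ j.val)
        = ∏ j : Fin k, ((q:ℝ) ^ d' - (q:ℝ) ^ j.val) := by
      rw [gbinom, Fin.prod_univ_eq_prod_range (fun j => ((q:ℝ) ^ k - (q:ℝ) ^ j)),
        Fin.prod_univ_eq_prod_range (fun j => ((q:ℝ) ^ d' - (q:ℝ) ^ j)),
        ← Finset.prod_mul_distrib]
      refine Finset.prod_congr rfl fun j hj => ?_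
      rw [Finset.mem_range] at hj
      have hkj : (1:ℝ) < (q:ℝ) ^ (k - j) := one_lt_pow₀ hq1 (by omega)
      have h1 : (q:ℝ) ^ (k - j) - 1 ≠ 0 := by linarith
      have e2 : ∀ a : ℕ, j ≤ a →
          (q:ℝ) ^ a - (q:ℝ) ^ j = (q:ℝ) ^ j * ((q:ℝ) ^ (a - j) - 1) := by
        intro a ha
        rw [mul_sub, mul_one, ← pow_add]
        congr 2
        omega
      rw [e2 k hj.le, e2 d' (hj.le.trans hk)]
      field_simp
    apply mul_right_cancel₀ (ne_of_gt hPk)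
    rw [keyR, mul_assoc, gb]
  · have hz : (∏ j : Fin k, (q ^ d' - q ^ j.val)) = 0 :=
      Finset.prod_eq_zero (Finset.mem_univ (⟨d', hk⟩ : Fin k)) (by simp)
    have hN0 : N = 0 := by
      have hp : 0 < ∏ j : Fin k, (q ^ k - q ^ j.val) :=
        Finset.prod_pos fun j _ => hposk j
      rw [hz, mul_zero] at key
      rcases Nat.mul_eq_zero.mp key with h | h
      · exact h
      · omega
    have hgb : gbinom q d' k = 0 := by
      rw [gbinom]
      refine Finset.prod_eq_zero (Finset.mem_range.mpr hk) ?_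
      simp
    rw [hN0, hgb, mul_zero, Nat.cast_zero]
lemma finrank_map_mkQ (S T : Submodule K V) :
    finrank K (Submodule.map S.mkQ T) + finrank K ↥(S ⊓ T) = finrank K T := by
  have h := LinearMap.finrank_range_add_finrank_ker (S.mkQ ∘ₗ T.subtype)
  rw [LinearMap.range_comp, Submodule.range_subtype] at h
  have hker : LinearMap.ker (S.mkQ ∘ₗ T.subtype) = Submodule.comap T.subtype (S ⊓ T) := by
    rw [LinearMap.ker_comp, Submodule.ker_mkQ]
    ext x
    simp [Submodule.mem_comap, x.2]
  rw [hker, (Submodule.comapSubtypeEquivOfLe (inf_le_right : S ⊓ T ≤ T)).finrank_eq] at h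
  exact h

end aux

theorem stmt_3 (q n i f e : ℕ) (K : Type*) [Field K] [Fintype K] (hq : Fintype.card K = q)
    (V : Type*) [AddCommGroup V] [Module K V] [FiniteDimensional K V]
    (hV : Module.finrank K V = n)
    (S S' : Submodule K V) (hS : Module.finrank K S = i) (hS' : Module.finrank K S' = f)
    (hdisj : S ⊓ S' = ⊥) (hie : i ≤ e) (hif : i + f ≤ n) :
    (Nat.card {T : Submodule K V | Module.finrank K T = e ∧ S ≤ T ∧ T ⊓ S' = ⊥} : ℝ)
      = (q : ℝ) ^ (f * (e - i)) * gbinom q (n - i - f) (e - i) := by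
  subst hq
  set S'' := Submodule.map S.mkQ S' with hS''
  have hπs : Function.Surjective S.mkQ := Submodule.mkQ_surjective S
  have hQ : finrank K (V ⧸ S) = n - i := by
    have h := Submodule.finrank_quotient_add_finrank S
    rw [hS, hV] at h
    omega
  have hS''f : finrank K S'' = f := by
    have h := finrank_map_mkQ S S'
    rw [hdisj, finrank_bot, add_zero, hS'] at h
    exact h
  have hker : ∀ x : V, S.mkQ x = 0 ↔ x ∈ S := fun x => by
    rw [Submodule.mkQ_apply, Submodule.Quotient.mk_eq_zero]
  have mem1 : ∀ T : Submodule K V, finrank K T = e → S ≤ T → T ⊓ S' = ⊥ →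
      finrank K (Submodule.map S.mkQ T) = e - i ∧ Submodule.map S.mkQ T ⊓ S'' = ⊥ := by
    intro T hTe hST hTS'
    constructor
    · have h := finrank_map_mkQ S T
      rw [inf_eq_left.mpr hST, hS, hTe] at h
      omega
    · rw [eq_bot_iff]
      rintro x ⟨hxT, hxS'⟩
      obtain ⟨t, ht, rfl⟩ := hxT
      obtain ⟨s, hs, hts⟩ := hxS'
      have hsub : t - s ∈ S := by
        rw [← hker]
        rw [map_sub, hts, sub_self]
      have hsT : s ∈ T := by
        have h2 : t - (t - s) ∈ T := sub_mem ht (hST hsub)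
        simpa using h2
      have h3 : s ∈ T ⊓ S' := ⟨hsT, hs⟩
      rw [hTS'] at h3
      simp only [Submodule.mem_bot] at h3
      rw [Submodule.mem_bot, ← hts, h3, map_zero]
  have mem2 : ∀ U : Submodule K (V ⧸ S), finrank K U = e - i → U ⊓ S'' = ⊥ →
      finrank K (Submodule.comap S.mkQ U) = e ∧ S ≤ Submodule.comap S.mkQ U ∧
        Submodule.comap S.mkQ U ⊓ S' = ⊥ := by
    intro U hUe hUS''
    have hSle : S ≤ Submodule.comap S.mkQ U := fun x hx => by
      simp only [Submodule.mem_comap]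
      rw [(hker x).mpr hx]
      exact U.zero_mem
    refine ⟨?_, hSle, ?_⟩
    · have h := finrank_map_mkQ S (Submodule.comap S.mkQ U)
      rw [inf_eq_left.mpr hSle, hS,
        Submodule.map_comap_eq_of_surjective hπs, hUe] at h
      omega
    · rw [eq_bot_iff]
      rintro x ⟨hxT, hxS'⟩
      have h4 : S.mkQ x ∈ U ⊓ S'' := ⟨hxT, Submodule.mem_map_of_mem hxS'⟩
      rw [hUS''] at h4
      simp only [Submodule.mem_bot] at h4
      have hxS : x ∈ S := (hker x).mp h4
      have h5 : x ∈ S ⊓ S' := ⟨hxS, hxS'⟩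
      rw [hdisj] at h5
      simpa using h5
  have e1 : {T : Submodule K V | finrank K T = e ∧ S ≤ T ∧ T ⊓ S' = ⊥}
      ≃ {U : Submodule K (V ⧸ S) // finrank K U = e - i ∧ U ⊓ S'' = ⊥} :=
  { toFun := fun T => ⟨Submodule.map S.mkQ T.1, mem1 T.1 T.2.1 T.2.2.1 T.2.2.2⟩
    invFun := fun U => ⟨Submodule.comap S.mkQ U.1, mem2 U.1 U.2.1 U.2.2⟩
    left_inv := fun T => by
      apply Subtype.ext
      show Submodule.comap S.mkQ (Submodule.map S.mkQ T.1) = T.1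
      rw [Submodule.comap_map_mkQ, sup_eq_right.mpr T.2.2.1]
    right_inv := fun U => by
      apply Subtype.ext
      exact Submodule.map_comap_eq_of_surjective hπs U.1 }
  rw [Nat.card_congr e1, card_avoid S'' (e - i), hS''f, hQ]
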